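/- For every a > 0 and all b, η ∈ ℝ, ∫_{−∞}^{∞} exp(−a·x² + b·x) · (sinh(η·x)/x) dx = √π · ∫_{(b−η)/(2√a)}^{(b+η)/(2√a)} exp(u²) du. (Equivalently, the left-hand side equals (π/2)·(erfi((b+η)/(2√a)) − erfi((b−η)/(2√a))), where erfi(z) = (2/√π)∫₀^z exp(u²) du.) -/

import Mathlib

open MeasureTheory

open Real

lemma gauss_integrable {a : ℝ} (ha : 0 < a) (c : ℝ) :
    Integrable fun x : ℝ => Real.exp (-a*x^2 + c*x) := by
  have h : ∀ x : ℝ, Real.exp (-a*x^2+c*x)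
      = Real.exp (c^2/(4*a)) * Real.exp (-a*(x - c/(2*a))^2) := by
    intro x; rw [← Real.exp_add]; congr 1; field_simp; ring
  simp_rw [h]
  exact ((integrable_exp_neg_mul_sq ha).comp_sub_right (c/(2*a))).const_mul _

lemma gauss_eval {a : ℝ} (ha : 0 < a) (c : ℝ) :
    ∫ x : ℝ, Real.exp (-a*x^2 + c*x)
      = Real.exp (c^2/(4*a)) * Real.sqrt (Real.pi/a) := by
  have h : ∀ x : ℝ, Real.exp (-a*x^2+c*x)
      = Real.exp (c^2/(4*a)) * Real.exp (-a*(x - c/(2*a))^2) := by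
    intro x; rw [← Real.exp_add]; congr 1; field_simp; ring
  simp_rw [h]
  rw [MeasureTheory.integral_const_mul,
    integral_sub_right_eq_self (fun y => Real.exp (-a*y^2)) (c/(2*a)), integral_gaussian]

lemma cosh_int {x η : ℝ} (hx : x ≠ 0) :
    ∫ t in (0:ℝ)..η, Real.cosh (t * x) = Real.sinh (η*x) / x := by
  rw [intervalIntegral.integral_comp_mul_right Real.cosh hx]
  have : ∫ s in (0*x)..(η*x), Real.cosh s = Real.sinh (η*x) - Real.sinh (0*x) :=
    intervalIntegral.integral_eq_sub_of_hasDerivAt (fun s _ => Real.hasDerivAt_sinh s)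
      (Real.continuous_cosh.intervalIntegrable _ _)
  rw [this]
  simp [smul_eq_mul, inv_mul_eq_div]

lemma cosh_le_exp_abs (y : ℝ) : Real.cosh y ≤ Real.exp |y| := by
  rw [Real.cosh_eq]
  have h1 := Real.exp_le_exp.2 (le_abs_self y)
  have h2 := Real.exp_le_exp.2 (neg_le_abs y)
  linarith

lemma main_nonneg (a b η : ℝ) (ha : 0 < a) (hη : 0 ≤ η) :
    ∫ x : ℝ, Real.exp (-a * x^2 + b * x) * (Real.sinh (η * x) / x) =
      Real.sqrt Real.pi *
        ∫ u in (b - η) / (2 * Real.sqrt a)..(b + η) / (2 * Real.sqrt a), Real.exp (u^2) := by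
  have sqa : 0 < Real.sqrt a := Real.sqrt_pos.2 ha
  set c0 : ℝ := (2 * Real.sqrt a)⁻¹ with hc0
  have hc0pos : 0 < c0 := by positivity
  have hc0ne : c0 ≠ 0 := hc0pos.ne'
  have hc0sq : c0^2 = 1/(4*a) := by
    rw [hc0, inv_pow]
    congr 1
    rw [mul_pow, Real.sq_sqrt ha.le]; norm_num
  set f : ℝ → ℝ → ℝ := fun x t => Real.exp (-a*x^2 + b*x) * Real.cosh (t*x) with hf
  set ν : Measure ℝ := volume.restrict (Set.Ioc (0:ℝ) η) with hν
  have hcont : Continuous (Function.uncurry f) := by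
    apply Continuous.mul
    · exact Real.continuous_exp.comp (by fun_prop)
    · exact Real.continuous_cosh.comp (by fun_prop)
  -- a.e. membership of second coordinate
  have hae : ∀ᵐ p : ℝ × ℝ ∂(volume.prod ν), p.2 ∈ Set.Ioc (0:ℝ) η := by
    rw [Filter.eventually_iff, mem_ae_iff]
    have hset : {p : ℝ × ℝ | p.2 ∈ Set.Ioc (0:ℝ) η}ᶜ = Set.univ ×ˢ (Set.Ioc (0:ℝ) η)ᶜ := by
      ext p; simp
    rw [hset, Measure.prod_prod, hν, Measure.restrict_apply measurableSet_Ioc.compl]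
    simp
  -- integrability on the product
  have hmaj : Integrable (fun x : ℝ =>
      Real.exp (-a*x^2 + (b+η)*x) + Real.exp (-a*x^2 + (b-η)*x)) volume :=
    (gauss_integrable ha _).add (gauss_integrable ha _)
  have hint : Integrable (Function.uncurry f) (volume.prod ν) := by
    apply Integrable.mono'
      (g := fun p : ℝ × ℝ =>
        (Real.exp (-a*p.1^2 + (b+η)*p.1) + Real.exp (-a*p.1^2 + (b-η)*p.1)) * 1)
      (hmaj.mul_prod (integrable_const 1)) hcont.aestronglyMeasurable
    filter_upwards [hae] with p hp
    have h1 : (0:ℝ) < Real.cosh (p.2 * p.1) := Real.cosh_pos _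
    have hup : Function.uncurry f p = Real.exp (-a*p.1^2 + b*p.1) * Real.cosh (p.2*p.1) := rfl
    have habs : ‖Function.uncurry f p‖ = Real.exp (-a*p.1^2 + b*p.1) * Real.cosh (p.2*p.1) := by
      rw [Real.norm_eq_abs, hup, abs_of_nonneg (mul_nonneg (Real.exp_pos _).le h1.le)]
    rw [habs, mul_one]
    have hstep : Real.exp (-a*p.1^2 + b*p.1) * Real.cosh (p.2*p.1)
        ≤ Real.exp (-a*p.1^2 + b*p.1 + η * |p.1|) := by
      calc Real.exp (-a*p.1^2 + b*p.1) * Real.cosh (p.2*p.1)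
          ≤ Real.exp (-a*p.1^2 + b*p.1) * Real.exp |p.2*p.1| :=
            mul_le_mul_of_nonneg_left (cosh_le_exp_abs _) (Real.exp_pos _).le
        _ = Real.exp (-a*p.1^2 + b*p.1 + |p.2*p.1|) := by rw [← Real.exp_add]
        _ ≤ Real.exp (-a*p.1^2 + b*p.1 + η * |p.1|) := by
            apply Real.exp_le_exp.2
            have : |p.2 * p.1| ≤ η * |p.1| := by
              rw [abs_mul]
              apply mul_le_mul_of_nonneg_right _ (abs_nonneg _)
              rw [abs_of_pos hp.1]; exact hp.2
            linarith
    refine hstep.trans ?_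
    rcases le_total 0 p.1 with hx | hx
    · rw [abs_of_nonneg hx]
      calc Real.exp (-a*p.1^2 + b*p.1 + η*p.1) = Real.exp (-a*p.1^2 + (b+η)*p.1) := by ring_nf
        _ ≤ _ := le_add_of_nonneg_right (Real.exp_pos _).le
    · rw [abs_of_nonpos hx]
      calc Real.exp (-a*p.1^2 + b*p.1 + η*(-p.1)) = Real.exp (-a*p.1^2 + (b-η)*p.1) := by ring_nf
        _ ≤ _ := le_add_of_nonneg_left (Real.exp_pos _).le
  -- step 1: rewrite the integrand as an inner integral
  have h0 : ∀ᵐ x : ℝ ∂(volume : Measure ℝ), x ≠ 0 := by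
    have hs : {x : ℝ | x ≠ 0}ᶜ = {0} := by ext y; simp
    rw [Filter.eventually_iff, mem_ae_iff, hs]
    exact measure_singleton 0
  have step1 : ∫ x : ℝ, Real.exp (-a * x^2 + b * x) * (Real.sinh (η * x) / x)
      = ∫ x : ℝ, ∫ t, f x t ∂ν := by
    apply integral_congr_ae
    filter_upwards [h0] with x hx
    have : ∫ t, f x t ∂ν = ∫ t in (0:ℝ)..η, f x t := by
      rw [intervalIntegral.integral_of_le hη]
    rw [this, intervalIntegral.integral_const_mul, cosh_int hx]
  rw [step1, integral_integral_swap hint]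
  -- step 2: compute the inner integral
  have hF : ∀ t : ℝ, ∫ x : ℝ, f x t
      = Real.exp ((c0*t + c0*b)^2) * (Real.sqrt (Real.pi/a)/2)
        + Real.exp ((-c0*t + c0*b)^2) * (Real.sqrt (Real.pi/a)/2) := by
    intro t
    have e1 : ∀ x : ℝ, f x t
        = (Real.exp (-a*x^2 + (b+t)*x) + Real.exp (-a*x^2 + (b-t)*x))/2 := by
      intro x
      have h1 : Real.exp (-a*x^2 + (b+t)*x) = Real.exp (-a*x^2+b*x) * Real.exp (t*x) := by
        rw [← Real.exp_add]; congr 1; ring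
      have h2 : Real.exp (-a*x^2 + (b-t)*x) = Real.exp (-a*x^2+b*x) * Real.exp (-(t*x)) := by
        rw [← Real.exp_add]; congr 1; ring
      rw [hf]; simp only
      rw [Real.cosh_eq, h1, h2]
      ring
    have e2 : ∀ s : ℝ, (s)^2/(4*a) = (c0*s)^2 := by
      intro s
      have : (c0*s)^2 = c0^2 * s^2 := by ring
      rw [this, hc0sq]; ring
    simp_rw [e1]
    rw [integral_div, integral_add (gauss_integrable ha _) (gauss_integrable ha _),
      gauss_eval ha, gauss_eval ha]
    have q1 : (b+t)^2/(4*a) = (c0*t + c0*b)^2 := by rw [e2 (b+t)]; ring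
    have q2 : (b-t)^2/(4*a) = (-c0*t + c0*b)^2 := by rw [e2 (b-t)]; ring
    rw [q1, q2]; ring
  have hresν : ∫ t, (∫ x : ℝ, f x t) ∂ν = ∫ t in (0:ℝ)..η, ∫ x : ℝ, f x t := by
    rw [intervalIntegral.integral_of_le hη]
  rw [hresν]
  rw [intervalIntegral.integral_congr (g := fun t =>
      Real.exp ((c0*t + c0*b)^2) * (Real.sqrt (Real.pi/a)/2)
        + Real.exp ((-c0*t + c0*b)^2) * (Real.sqrt (Real.pi/a)/2))
      (fun t _ => hF t)]
  -- step 3: interval integral computation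
  have g_cont : Continuous (fun u : ℝ => Real.exp (u^2)) := by fun_prop
  have iA : IntervalIntegrable (fun t => Real.exp ((c0*t + c0*b)^2)) volume 0 η :=
    (g_cont.comp (by fun_prop)).intervalIntegrable _ _
  have iB : IntervalIntegrable (fun t => Real.exp ((-c0*t + c0*b)^2)) volume 0 η :=
    (g_cont.comp (by fun_prop)).intervalIntegrable _ _
  rw [intervalIntegral.integral_add (iA.mul_const _) (iB.mul_const _),
    intervalIntegral.integral_mul_const, intervalIntegral.integral_mul_const]
  have sne : Real.sqrt a ≠ 0 := sqa.ne'
  have e00 : c0*(0:ℝ) + c0*b = b/(2*Real.sqrt a) := by rw [hc0]; field_simp; ring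
  have eplus : c0*η + c0*b = (b+η)/(2*Real.sqrt a) := by rw [hc0]; field_simp; ring
  have e00' : -c0*(0:ℝ) + c0*b = b/(2*Real.sqrt a) := by rw [hc0]; field_simp; ring
  have eminus : -c0*η + c0*b = (b-η)/(2*Real.sqrt a) := by rw [hc0]; field_simp; ring
  have hA : ∫ t in (0:ℝ)..η, Real.exp ((c0*t + c0*b)^2)
      = c0⁻¹ * ∫ u in (b/(2*Real.sqrt a))..((b+η)/(2*Real.sqrt a)), Real.exp (u^2) := by
    rw [intervalIntegral.integral_comp_mul_add (fun u => Real.exp (u^2)) hc0ne (c0*b),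
      e00, eplus, smul_eq_mul]
  have hB : ∫ t in (0:ℝ)..η, Real.exp ((-c0*t + c0*b)^2)
      = c0⁻¹ * ∫ u in ((b-η)/(2*Real.sqrt a))..(b/(2*Real.sqrt a)), Real.exp (u^2) := by
    rw [intervalIntegral.integral_comp_mul_add (fun u => Real.exp (u^2)) (neg_ne_zero.2 hc0ne) (c0*b),
      e00', eminus, smul_eq_mul, intervalIntegral.integral_symm, inv_neg]
    ring
  rw [hA, hB]
  have hadj : (∫ u in ((b-η)/(2*Real.sqrt a))..(b/(2*Real.sqrt a)), Real.exp (u^2))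
      + (∫ u in (b/(2*Real.sqrt a))..((b+η)/(2*Real.sqrt a)), Real.exp (u^2))
      = ∫ u in ((b-η)/(2*Real.sqrt a))..((b+η)/(2*Real.sqrt a)), Real.exp (u^2) :=
    intervalIntegral.integral_add_adjacent_intervals
      (g_cont.intervalIntegrable _ _) (g_cont.intervalIntegrable _ _)
  have hconst : c0⁻¹ * (Real.sqrt (Real.pi/a)/2) = Real.sqrt Real.pi := by
    rw [hc0, inv_inv]
    rw [show Real.pi/a = Real.pi * a⁻¹ by ring, Real.sqrt_mul Real.pi_pos.le,
      Real.sqrt_inv]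
    field_simp
  calc c0⁻¹ * (∫ u in (b/(2*Real.sqrt a))..((b+η)/(2*Real.sqrt a)), Real.exp (u^2))
          * (Real.sqrt (Real.pi/a)/2)
        + c0⁻¹ * (∫ u in ((b-η)/(2*Real.sqrt a))..(b/(2*Real.sqrt a)), Real.exp (u^2))
          * (Real.sqrt (Real.pi/a)/2)
      = (c0⁻¹ * (Real.sqrt (Real.pi/a)/2)) *
        ((∫ u in ((b-η)/(2*Real.sqrt a))..(b/(2*Real.sqrt a)), Real.exp (u^2))
          + (∫ u in (b/(2*Real.sqrt a))..((b+η)/(2*Real.sqrt a)), Real.exp (u^2))) := by ring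
    _ = Real.sqrt Real.pi *
        ∫ u in ((b-η)/(2*Real.sqrt a))..((b+η)/(2*Real.sqrt a)), Real.exp (u^2) := by
        rw [hadj, hconst]


/-- For `a > 0` and `b, η ∈ ℝ`:
`∫_{−∞}^{∞} e^{−ax² + bx}·(sinh(ηx)/x) dx = √π · ∫_{(b−η)/(2√a)}^{(b+η)/(2√a)} e^{u²} du`. -/
theorem statement15 (a b η : ℝ) (ha : 0 < a) :
    ∫ x : ℝ, Real.exp (-a * x^2 + b * x) * (Real.sinh (η * x) / x) =
      Real.sqrt Real.pi *
        ∫ u in (b - η) / (2 * Real.sqrt a)..(b + η) / (2 * Real.sqrt a), Real.exp (u^2) := by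
  rcases le_or_gt 0 η with hη | hη
  · exact main_nonneg a b η ha hη
  · have key := main_nonneg a b (-η) ha (by linarith)
    have hneg : ∀ x : ℝ, Real.exp (-a*x^2 + b*x) * (Real.sinh (-η * x) / x)
        = -(Real.exp (-a*x^2 + b*x) * (Real.sinh (η * x) / x)) := by
      intro x
      rw [show -η*x = -(η*x) by ring, Real.sinh_neg]
      ring
    simp_rw [hneg] at key
    rw [integral_neg] at key
    have hb1 : b - -η = b + η := by ring
    have hb2 : b + -η = b - η := by ring
    rw [hb1, hb2] at key
    rw [intervalIntegral.integral_symm, mul_neg] at key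
    linarith
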